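/- For every k ≥ 1 and every permutation π of Fin k, the number of permutations σ of Fin k satisfying c(π⁻¹ * σ) + c(σ) = k + c(π) is at most catalan k, the k-th Catalan number. -/

import Mathlib

/-- Number of cycles of a permutation, counting fixed points. -/
def cyc {k : ℕ} (π : Equiv.Perm (Fin k)) : ℕ :=
  π.cycleType.card + (Finset.univ.filter fun x => π x = x).card

namespace CatGeo

open Equiv Equiv.Perm Finset

variable {α : Type*} [DecidableEq α] [Fintype α]

/-- `dd f = ∑ (ℓᵢ - 1)` over cycle lengths: the transposition distance to the identity. -/
def DD (M : Multiset ℕ) : ℕ := (M.map (· - 1)).sum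

def dd (f : Perm α) : ℕ := DD f.cycleType

/-- Product of catalan numbers over a multiset. -/
def GG (M : Multiset ℕ) : ℕ := (M.map catalan).prod

/-- `{n}` if `n ≥ 2`, else `0`: the cycle type contribution of a cycle of length `n`. -/
def f2 (n : ℕ) : Multiset ℕ := if 2 ≤ n then {n} else 0

lemma DD_add (M N : Multiset ℕ) : DD (M + N) = DD M + DD N := by simp [DD]

lemma DD_cons (n : ℕ) (M : Multiset ℕ) : DD (n ::ₘ M) = (n - 1) + DD M := by simp [DD]

lemma GG_add (M N : Multiset ℕ) : GG (M + N) = GG M * GG N := by simp [GG]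

lemma GG_cons (n : ℕ) (M : Multiset ℕ) : GG (n ::ₘ M) = catalan n * GG M := by simp [GG]

lemma DD_f2 {n : ℕ} (hn : 1 ≤ n) : DD (f2 n) = n - 1 := by
  rcases eq_or_lt_of_le hn with h | h
  · simp [f2, ← h]; rfl
  · rw [f2, if_pos (by omega : 2 ≤ n)]; simp [DD]

lemma GG_f2 {n : ℕ} (hn : 1 ≤ n) : GG (f2 n) = catalan n := by
  rcases eq_or_lt_of_le hn with h | h
  · simp [f2, ← h, GG, catalan_one]
  · rw [f2, if_pos (by omega : 2 ≤ n)]; simp [GG]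

lemma dd_inv (f : Perm α) : dd f⁻¹ = dd f := by simp [dd, cycleType_inv]

/-- Periodicity reduction: if `F^p y = y` then any integer power of `F` at `y` is a
small natural power. -/
lemma pz (F : Perm α) (y : α) {p : ℕ} (hp : 0 < p) (hy : (F ^ p) y = y) (n : ℤ) :
    ∃ r : ℕ, r < p ∧ (F ^ n) y = (F ^ r) y := by
  refine ⟨(n % p).toNat, ?_, ?_⟩
  · have h1 : 0 ≤ n % p := Int.emod_nonneg n (by exact_mod_cast hp.ne')
    have h2 : n % p < p := Int.emod_lt_of_pos n (by exact_mod_cast hp)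
    omega
  · have h1 : 0 ≤ n % p := Int.emod_nonneg n (by exact_mod_cast hp.ne')
    have hdecomp : n = (p : ℤ) * (n / p) + n % p := (Int.mul_ediv_add_emod n p).symm
    have hfix : ((F ^ (p : ℤ)) ^ (n / p)) y = y := by
      apply zpow_apply_eq_self_of_apply_eq_self
      simpa [zpow_natCast] using hy
    calc (F ^ n) y = (F ^ (n % p + (p : ℤ) * (n / p))) y := by rw [add_comm, ← hdecomp]
      _ = (F ^ ((n % p).toNat)) (((F ^ (p:ℤ)) ^ (n / p)) y) := by
          rw [zpow_add, zpow_mul, mul_apply,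
            ← zpow_natCast F ((n % p).toNat), Int.toNat_of_nonneg h1]
      _ = (F ^ ((n % p).toNat)) y := by rw [hfix]

/-- The key surgery lemma: multiplying by a transposition within a cycle splits it. -/
theorem split (f : Perm α) {a b : α} (hab : a ≠ b) (hsc : f.SameCycle a b) :
    ∃ (u : ℕ) (H : Multiset ℕ), 0 < u ∧ u < (f.cycleOf a).support.card ∧ (f ^ u) a = b ∧
      f.cycleType = (f.cycleOf a).support.card ::ₘ H ∧
      (Equiv.swap a b * f).cycleType = f2 u + f2 ((f.cycleOf a).support.card - u) + H ∧
      ((Equiv.swap a b * f).cycleOf a).support.card = if u = 1 then 0 else u := by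
  classical
  have hfa : f a ≠ a := by
    intro h
    obtain ⟨i, hi⟩ := hsc
    rw [zpow_apply_eq_self_of_apply_eq_self h] at hi
    exact hab hi
  set S := (f.cycleOf a).support with hSdef
  have hS : f.IsCycleOn S := f.isCycleOn_support_cycleOf a
  have haS : a ∈ S := mem_support_cycleOf_iff.2 ⟨SameCycle.refl f a, mem_support.2 hfa⟩
  have hbS : b ∈ S := mem_support_cycleOf_iff.2 ⟨hsc, mem_support.2 hfa⟩
  set m := S.card with hmdef
  have hm2 : 2 ≤ m := by
    have := (isCycle_cycleOf f hfa).two_le_card_support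
    exact this
  obtain ⟨j, hjm, hja⟩ := hS.exists_pow_eq haS hbS
  have hj0 : 0 < j := by
    rcases Nat.eq_zero_or_pos j with h | h
    · exfalso; rw [h, pow_zero] at hja; exact hab hja
    · exact h
  have hper : ∀ n : ℕ, (f ^ n) a = a ↔ m ∣ n := fun n => hS.pow_apply_eq haS
  have hinj : ∀ {i i' : ℕ}, i < m → i' < m → (f ^ i) a = (f ^ i') a → i = i' := by
    intro i i' hi hi' h
    have := (hS.pow_apply_eq_pow_apply haS).1 h
    rwa [Nat.ModEq, Nat.mod_eq_of_lt hi, Nat.mod_eq_of_lt hi'] at this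
  have hscf : ∀ i : ℕ, f.SameCycle a ((f ^ i) a) := fun i => ⟨(i : ℤ), by rw [zpow_natCast]⟩
  have hmemS : ∀ x, x ∈ S ↔ ∃ i, i < m ∧ (f ^ i) a = x := by
    intro x
    constructor
    · intro hx
      obtain ⟨i, hi, he⟩ := hS.exists_pow_eq haS hx
      exact ⟨i, hi, he⟩
    · rintro ⟨i, hi, rfl⟩
      exact mem_support_cycleOf_iff.2 ⟨hscf i, mem_support.2 hfa⟩
  set g := f.cycleOf a with hgdef
  have hgval : ∀ x, f.SameCycle a x → g x = f x := fun x h => h.cycleOf_apply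
  have hgfix : ∀ x, ¬ f.SameCycle a x → g x = x := fun x h => cycleOf_apply_of_not_sameCycle h
  have hgpow : ∀ i : ℕ, (g ^ i) a = (f ^ i) a := fun i => f.cycleOf_pow_apply_self a i
  set h := g⁻¹ * f with hhdef
  have hf_eq : f = g * h := by rw [hhdef]; group
  have hgh : ∀ x, g (h x) = f x := by
    intro x
    conv_rhs => rw [hf_eq]
    rfl
  have hhx : ∀ x, f.SameCycle a x → h x = x := by
    intro x hx
    apply g.injective
    rw [hgh x, hgval x hx]
  have hhx' : ∀ x, ¬ f.SameCycle a x → h x = f x := by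
    intro x hx
    apply g.injective
    rw [hgh x]
    exact (hgfix _ (fun hc => hx (sameCycle_apply_right.1 hc))).symm
  have hdisj_gh : g.Disjoint h := by
    intro x
    by_cases hx : f.SameCycle a x
    · exact Or.inr (hhx x hx)
    · exact Or.inl (hgfix x hx)
  set t := Equiv.swap a b with htdef
  set G : Perm α := t * g with hGdef
  have htf : t * f = G * h := by rw [hGdef, hf_eq]; group
  have hdisj_Gh : G.Disjoint h := by
    intro x
    by_cases hx : f.SameCycle a x
    · exact Or.inr (hhx x hx)
    · left
      have hxa : x ≠ a := fun e => hx (e ▸ SameCycle.refl f x)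
      have hxb : x ≠ b := fun e => hx (e ▸ hsc)
      rw [hGdef, mul_apply, hgfix x hx, swap_apply_of_ne_of_ne hxa hxb]
  have hGeval : ∀ i : ℕ, G ((f ^ i) a) = t ((f ^ (i + 1)) a) := by
    intro i
    have h1 : G ((f ^ i) a) = t (f ((f ^ i) a)) := by
      rw [hGdef, mul_apply, hgval _ (hscf i)]
    rw [h1, ← mul_apply f (f ^ i), ← pow_succ']
  have hA : ∀ i, i < j → (G ^ i) a = (f ^ i) a := by
    intro i
    induction i with
    | zero => intro _; simp
    | succ i ih =>
      intro hij
      rw [pow_succ', mul_apply, ih (by omega), hGeval i]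
      apply swap_apply_of_ne_of_ne
      · intro e
        have hd := (hper (i + 1)).1 e
        have : i + 1 < m := by omega
        have := Nat.le_of_dvd (by omega) hd
        omega
      · intro e
        have := hinj (show i + 1 < m by omega) hjm (e.trans hja.symm)
        omega
  have hAJ : (G ^ j) a = a := by
    have hj : j = (j - 1) + 1 := by omega
    rw [hj, pow_succ', mul_apply, hA (j - 1) (by omega), hGeval (j - 1), ← hj]
    have : (f ^ j) a = b := hja
    rw [this]
    exact swap_apply_right a b
  have hB : ∀ i, i < m - j → (G ^ i) b = (f ^ (j + i)) a := by
    intro i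
    induction i with
    | zero => intro _; simpa using hja.symm
    | succ i ih =>
      intro hij
      rw [pow_succ', mul_apply, ih (by omega), hGeval (j + i),
        show j + i + 1 = j + (i + 1) by omega]
      apply swap_apply_of_ne_of_ne
      · intro e
        have hd := (hper (j + (i + 1))).1 e
        have := Nat.le_of_dvd (by omega) hd
        omega
      · intro e
        rw [← hja] at e
        have := hinj (show j + (i + 1) < m by omega) hjm e
        omega
  have hBJ : (G ^ (m - j)) b = b := by
    have hmj : m - j = (m - j - 1) + 1 := by omega
    rw [hmj, pow_succ', mul_apply, hB (m - j - 1) (by omega), hGeval (j + (m - j - 1)),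
      show j + (m - j - 1) + 1 = m by omega]
    rw [(hper m).2 dvd_rfl]
    exact swap_apply_left a b
  have hclassA : ∀ x, G.SameCycle a x ↔ ∃ i, i < j ∧ (f ^ i) a = x := by
    intro x
    constructor
    · rintro ⟨n, hn⟩
      obtain ⟨r, hr, he⟩ := pz G a hj0 hAJ n
      exact ⟨r, hr, by rw [← hA r hr, ← he, hn]⟩
    · rintro ⟨i, hi, rfl⟩
      exact ⟨(i : ℤ), by rw [zpow_natCast, hA i hi]⟩
  have hclassB : ∀ x, G.SameCycle b x ↔ ∃ i, i < m - j ∧ (f ^ (j + i)) a = x := by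
    intro x
    constructor
    · rintro ⟨n, hn⟩
      obtain ⟨r, hr, he⟩ := pz G b (by omega) hBJ n
      exact ⟨r, hr, by rw [← hB r hr, ← he, hn]⟩
    · rintro ⟨i, hi, rfl⟩
      exact ⟨(i : ℤ), by rw [zpow_natCast, hB i hi]⟩
  have hdisjclass : ∀ x, G.SameCycle a x → G.SameCycle b x → False := by
    intro x h1 h2
    obtain ⟨i, hi, hei⟩ := (hclassA x).1 h1
    obtain ⟨i', hi', hei'⟩ := (hclassB x).1 h2
    have := hinj (show j + i' < m by omega) (show i < m by omega) (hei'.trans hei.symm)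
    omega
  have hsupG : ∀ x, G x ≠ x → (G.SameCycle a x ∨ G.SameCycle b x) := by
    intro x hx
    have hxS : x ∈ S := by
      by_contra hxs
      have hnsc : ¬ f.SameCycle a x := fun hc =>
        hxs (mem_support_cycleOf_iff.2 ⟨hc, mem_support.2 hfa⟩)
      apply hx
      have hxa : x ≠ a := fun e => hnsc (e ▸ SameCycle.refl f x)
      have hxb : x ≠ b := fun e => hnsc (e ▸ hsc)
      rw [hGdef, mul_apply, hgfix x hnsc, swap_apply_of_ne_of_ne hxa hxb]
    obtain ⟨i, hi, rfl⟩ := (hmemS _).1 hxS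
    by_cases hij : i < j
    · exact Or.inl ((hclassA _).2 ⟨i, hij, rfl⟩)
    · exact Or.inr ((hclassB _).2 ⟨i - j, by omega, by rw [show j + (i - j) = i by omega]⟩)
  have hGdecomp : G = G.cycleOf a * G.cycleOf b := by
    apply Equiv.ext
    intro x
    have hrhs : (G.cycleOf a * G.cycleOf b) x = G.cycleOf a (G.cycleOf b x) := rfl
    by_cases h1 : G.SameCycle a x
    · have h2 : ¬ G.SameCycle b x := fun hh => hdisjclass x h1 hh
      rw [hrhs, cycleOf_apply_of_not_sameCycle h2, h1.cycleOf_apply]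
    · by_cases h2 : G.SameCycle b x
      · have h3 : ¬ G.SameCycle a (G x) := fun hh =>
          h1 (sameCycle_apply_right.1 hh)
        rw [hrhs, h2.cycleOf_apply, cycleOf_apply_of_not_sameCycle h3]
      · have hfix : G x = x := by
          by_contra hx
          rcases hsupG x hx with hh | hh
          · exact h1 hh
          · exact h2 hh
        rw [hrhs, cycleOf_apply_of_not_sameCycle h2,
          cycleOf_apply_of_not_sameCycle h1, hfix]
  have hdisj12 : (G.cycleOf a).Disjoint (G.cycleOf b) := by
    intro x
    by_cases h1 : G.SameCycle a x
    · exact Or.inr (cycleOf_apply_of_not_sameCycle (fun hh => hdisjclass x h1 hh))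
    · exact Or.inl (cycleOf_apply_of_not_sameCycle h1)
  have hcard : ∀ (p : ℕ) (ff : ℕ → α), (∀ i i', i < p → i' < p → ff i = ff i' → i = i') →
      ((Finset.range p).image ff).card = p := by
    intro p ff hff
    rw [Finset.card_image_of_injOn, Finset.card_range]
    intro i hi i' hi' he
    exact hff i i' (Finset.mem_range.1 hi) (Finset.mem_range.1 hi') he
  -- value of G at a
  have hGa1 : j = 1 → G a = a := by
    intro hj1
    have hb : b = f a := by rw [← hja, hj1, pow_one]
    rw [hGdef, mul_apply, hgval a (SameCycle.refl f a), ← hb]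
    exact swap_apply_right a b
  have hGa2 : j ≠ 1 → G a = f a := by
    intro hj1
    have hfab : f a ≠ b := by
      intro e
      have : (f ^ 1) a = (f ^ j) a := by rw [pow_one, hja, e]
      have := hinj (by omega) hjm this
      omega
    rw [hGdef, mul_apply, hgval a (SameCycle.refl f a)]
    exact swap_apply_of_ne_of_ne hfa hfab
  have hsuppc1 : G a ≠ a → (G.cycleOf a).support = (Finset.range j).image (fun i => (f ^ i) a) := by
    intro hGa
    ext y
    rw [mem_support_cycleOf_iff]
    simp only [Finset.mem_image, Finset.mem_range]
    constructor
    · rintro ⟨hy, -⟩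
      obtain ⟨i, hi, he⟩ := (hclassA y).1 hy
      exact ⟨i, hi, he⟩
    · rintro ⟨i, hi, rfl⟩
      exact ⟨(hclassA _).2 ⟨i, hi, rfl⟩, mem_support.2 hGa⟩
  have hctc1 : (G.cycleOf a).cycleType = f2 j := by
    by_cases hj1 : j = 1
    · have : G.cycleOf a = 1 := (cycleOf_eq_one_iff G).2 (hGa1 hj1)
      rw [this, cycleType_one, f2, if_neg (by omega)]
    · have hGa : G a ≠ a := by rw [hGa2 hj1]; exact hfa
      have hcyc : (G.cycleOf a).IsCycle := isCycle_cycleOf G hGa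
      rw [hcyc.cycleType, hsuppc1 hGa,
        hcard j (fun i => (f ^ i) a) (fun i i' hi hi' he => hinj (by omega) (by omega) he),
        f2, if_pos (by omega)]
  -- value of G at b
  have hGb1 : m - j = 1 → G b = b := by
    intro hmj
    conv_lhs => rw [← hja]
    rw [hGeval j, show j + 1 = m by omega, (hper m).2 dvd_rfl]
    exact swap_apply_left a b
  have hGb2 : m - j ≠ 1 → G b = (f ^ (j + 1)) a := by
    intro hmj
    conv_lhs => rw [← hja]
    rw [hGeval j]
    apply swap_apply_of_ne_of_ne
    · intro e
      have hd := (hper (j + 1)).1 e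
      have := Nat.le_of_dvd (by omega) hd
      omega
    · intro e
      rw [← hja] at e
      have := hinj (show j + 1 < m by omega) hjm e
      omega
  have hsuppc2 : G b ≠ b →
      (G.cycleOf b).support = (Finset.range (m - j)).image (fun i => (f ^ (j + i)) a) := by
    intro hGb
    ext y
    rw [mem_support_cycleOf_iff]
    simp only [Finset.mem_image, Finset.mem_range]
    constructor
    · rintro ⟨hy, -⟩
      obtain ⟨i, hi, he⟩ := (hclassB y).1 hy
      exact ⟨i, hi, he⟩
    · rintro ⟨i, hi, rfl⟩
      exact ⟨(hclassB _).2 ⟨i, hi, rfl⟩, mem_support.2 hGb⟩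
  have hctc2 : (G.cycleOf b).cycleType = f2 (m - j) := by
    by_cases hmj : m - j = 1
    · have : G.cycleOf b = 1 := (cycleOf_eq_one_iff G).2 (hGb1 hmj)
      rw [this, cycleType_one, f2, if_neg (by omega)]
    · have hGb : G b ≠ b := by
        rw [hGb2 hmj]
        intro e
        rw [← hja] at e
        have := hinj hjm (show j + 1 < m by omega) e.symm
        omega
      have hcyc : (G.cycleOf b).IsCycle := isCycle_cycleOf G hGb
      rw [hcyc.cycleType, hsuppc2 hGb,
        hcard (m - j) (fun i => (f ^ (j + i)) a)
          (fun i i' hi hi' he => by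
            have := hinj (show j + i < m by omega) (show j + i' < m by omega) he
            omega),
        f2, if_pos (by omega)]
  have hctG : G.cycleType = f2 j + f2 (m - j) := by
    rw [hGdecomp, hdisj12.cycleType_mul, hctc1, hctc2]
  have hctf : f.cycleType = m ::ₘ h.cycleType := by
    conv_lhs => rw [hf_eq]
    rw [hdisj_gh.cycleType_mul, (isCycle_cycleOf f hfa).cycleType]
    rfl
  have hctF : (t * f).cycleType = f2 j + f2 (m - j) + h.cycleType := by
    rw [htf, hdisj_Gh.cycleType_mul, hctG]
  have hlast : ((t * f).cycleOf a).support.card = if j = 1 then 0 else j := by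
    have hha : h a = a := hhx a (SameCycle.refl f a)
    have hd1 : (t * f).cycleOf a = G.cycleOf a := by
      rw [htf, hdisj_Gh.cycleOf_mul_distrib a, (cycleOf_eq_one_iff h).2 hha, mul_one]
    rw [hd1]
    by_cases hj1 : j = 1
    · rw [if_pos hj1]
      have : G.cycleOf a = 1 := (cycleOf_eq_one_iff G).2 (hGa1 hj1)
      rw [this, support_one, Finset.card_empty]
    · rw [if_neg hj1]
      have hGa : G a ≠ a := by rw [hGa2 hj1]; exact hfa
      rw [hsuppc1 hGa,
        hcard j (fun i => (f ^ i) a) (fun i i' hi hi' he => hinj (by omega) (by omega) he)]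
  exact ⟨j, h.cycleType, hj0, hjm, hja, hctf, hctF, hlast⟩

lemma split_dd (f : Perm α) {a b : α} (hab : a ≠ b) (hsc : f.SameCycle a b) :
    dd (Equiv.swap a b * f) + 1 = dd f := by
  obtain ⟨u, H, hu0, hum, -, hct, hctF, -⟩ := split f hab hsc
  have hm2 : 2 ≤ (f.cycleOf a).support.card := by omega
  rw [dd, dd, hct, hctF, DD_cons, DD_add, DD_add, DD_f2 (by omega), DD_f2 (by omega)]
  omega

lemma merge_sameCycle (f : Perm α) {a b : α} (hab : a ≠ b) (hnsc : ¬ f.SameCycle a b) :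
    (Equiv.swap a b * f).SameCycle a b := by
  by_cases hfa : f a = a
  · exact ⟨1, by rw [zpow_one, mul_apply, hfa, swap_apply_left]⟩
  · have hS := f.isCycleOn_support_cycleOf a
    have haS : a ∈ (f.cycleOf a).support :=
      mem_support_cycleOf_iff.2 ⟨SameCycle.refl f a, mem_support.2 hfa⟩
    set p := (f.cycleOf a).support.card with hpdef
    have hp2 : 2 ≤ p := (isCycle_cycleOf f hfa).two_le_card_support
    have hper : ∀ n : ℕ, (f ^ n) a = a ↔ p ∣ n := fun n => hS.pow_apply_eq haS
    have hA : ∀ i, i < p → ((Equiv.swap a b * f) ^ i) a = (f ^ i) a := by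
      intro i
      induction i with
      | zero => intro _; simp
      | succ i ih =>
        intro hip
        rw [pow_succ', mul_apply, ih (by omega), mul_apply]
        have h1 : f ((f ^ i) a) = (f ^ (i + 1)) a := by
          rw [← mul_apply f (f ^ i), ← pow_succ']
        rw [h1]
        apply swap_apply_of_ne_of_ne
        · intro e
          have := Nat.le_of_dvd (by omega) ((hper (i + 1)).1 e)
          omega
        · intro e
          exact hnsc ⟨((i : ℤ) + 1), by rw [show (i : ℤ) + 1 = ((i + 1 : ℕ) : ℤ) by push_cast; ring,
            zpow_natCast, e]⟩
    refine ⟨(p : ℤ), ?_⟩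
    rw [zpow_natCast, show p = (p - 1) + 1 by omega, pow_succ', mul_apply,
      hA (p - 1) (by omega), mul_apply]
    have h1 : f ((f ^ (p - 1)) a) = (f ^ p) a := by
      rw [← mul_apply f (f ^ (p - 1)), ← pow_succ', show p - 1 + 1 = p by omega]
    rw [h1, (hper p).2 dvd_rfl]
    exact swap_apply_left a b

lemma dd_merge (f : Perm α) {a b : α} (hab : a ≠ b) (hnsc : ¬ f.SameCycle a b) :
    dd (Equiv.swap a b * f) = dd f + 1 := by
  have h := merge_sameCycle f hab hnsc
  have hk : Equiv.swap a b * (Equiv.swap a b * f) = f := by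
    rw [← mul_assoc, swap_mul_self, one_mul]
  have := split_dd (Equiv.swap a b * f) hab h
  rw [hk] at this
  omega

lemma dd_one : dd (1 : Perm α) = 0 := by simp [dd, cycleType_one, DD]

lemma eq_one_of_dd_eq_zero {f : Perm α} (h : dd f = 0) : f = 1 := by
  by_contra hf
  have hne : f.cycleType ≠ 0 := fun e => hf (cycleType_eq_zero.1 e)
  obtain ⟨n, hn⟩ := Multiset.exists_mem_of_ne_zero hne
  have h2 : 2 ≤ n := two_le_of_mem_cycleType hn
  have : n - 1 ≤ DD f.cycleType := by
    apply Multiset.single_le_sum (fun x _ => Nat.zero_le x)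
    exact Multiset.mem_map_of_mem _ hn
  rw [dd] at h
  omega

lemma exists_swap_list (f : Perm α) : ∃ L : List (Perm α),
    (∀ τ ∈ L, ∃ x y, x ≠ y ∧ τ = Equiv.swap x y) ∧ L.prod = f ∧ L.length = dd f := by
  generalize hn : dd f = n
  induction n using Nat.strong_induction_on generalizing f with
  | _ n ih =>
    by_cases hf : f = 1
    · refine ⟨[], by simp, by simp [hf], by simp [← hn, hf, dd_one]⟩
    · have hex : ∃ a, f a ≠ a := by
        by_contra hc
        push_neg at hc
        exact hf (Equiv.ext fun x => hc x)
      obtain ⟨a, ha⟩ := hex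
      have hsc : f.SameCycle a (f a) := ⟨1, by rw [zpow_one]⟩
      have hdd := split_dd f (Ne.symm ha) hsc
      obtain ⟨L', hL', hprod', hlen'⟩ :=
        ih (dd (Equiv.swap a (f a) * f)) (by omega) (Equiv.swap a (f a) * f) rfl
      refine ⟨Equiv.swap a (f a) :: L', ?_, ?_, ?_⟩
      · intro τ ht
        rcases List.mem_cons.1 ht with h | h
        · exact ⟨a, f a, Ne.symm ha, h ▸ rfl⟩
        · exact hL' τ h
      · rw [List.prod_cons, hprod', ← mul_assoc, swap_mul_self, one_mul]
      · simp [hlen']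
        omega
  
lemma dd_mul_swap_le (f : Perm α) {x y : α} (hxy : x ≠ y) :
    dd (f * Equiv.swap x y) ≤ dd f + 1 := by
  have hrw : f * Equiv.swap x y = Equiv.swap (f x) (f y) * f := by
    rw [swap_apply_apply]
    group
  rw [hrw]
  have hne : f x ≠ f y := fun e => hxy (f.injective e)
  by_cases hsc : f.SameCycle (f x) (f y)
  · have := split_dd f hne hsc
    omega
  · rw [dd_merge f hne hsc]

lemma dd_mul_le (f g : Perm α) : dd (f * g) ≤ dd f + dd g := by
  obtain ⟨L, hL, hprod, hlen⟩ := exists_swap_list g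
  rw [← hlen, ← hprod]
  clear hprod hlen
  induction L generalizing f with
  | nil => simp
  | cons τ L' ih =>
    obtain ⟨x, y, hxy, rfl⟩ := hL τ (by simp)
    rw [List.prod_cons, ← mul_assoc]
    have h1 : dd (f * Equiv.swap x y * L'.prod) ≤ dd (f * Equiv.swap x y) + L'.length :=
      ih (f * Equiv.swap x y) (fun τ ht => hL τ (List.mem_cons_of_mem _ ht))
    have h2 := dd_mul_swap_le f hxy
    simp only [List.length_cons]
    omega

lemma catalan_le_succ (n : ℕ) : catalan n ≤ catalan (n + 1) := by
  rw [catalan_succ]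
  have := Finset.single_le_sum (f := fun i : Fin n.succ => catalan i * catalan (n - i))
    (fun i _ => Nat.zero_le _) (Finset.mem_univ (0 : Fin n.succ))
  simpa using this

lemma catalan_mono {m n : ℕ} (h : m ≤ n) : catalan m ≤ catalan n := by
  induction n, h using Nat.le_induction with
  | base => exact le_rfl
  | succ n hmn ih => exact ih.trans (catalan_le_succ n)

lemma catalan_range_succ (n : ℕ) :
    catalan (n + 1) = ∑ i ∈ Finset.range (n + 1), catalan i * catalan (n - i) := by
  rw [catalan_succ, ← Fin.sum_univ_eq_sum_range]

lemma catalan_mul_le (m n : ℕ) : catalan m * catalan n ≤ catalan (m + n) := by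
  induction m using Nat.strong_induction_on generalizing n with
  | _ m ih =>
    match m with
    | 0 => simpa using le_rfl
    | m' + 1 =>
      rw [catalan_range_succ, Finset.sum_mul]
      have hterm : ∀ i ∈ Finset.range (m' + 1),
          catalan i * catalan (m' - i) * catalan n ≤ catalan i * catalan (m' + n - i) := by
        intro i hi
        have hi' : i ≤ m' := by
          have := Finset.mem_range.1 hi
          omega
        rw [mul_assoc]
        apply Nat.mul_le_mul_left
        have := ih (m' - i) (by omega) n
        rwa [show m' - i + n = m' + n - i by omega] at this
      calc ∑ i ∈ Finset.range (m' + 1), catalan i * catalan (m' - i) * catalan n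
          ≤ ∑ i ∈ Finset.range (m' + 1), catalan i * catalan (m' + n - i) :=
            Finset.sum_le_sum hterm
        _ ≤ ∑ i ∈ Finset.range (m' + n + 1), catalan i * catalan (m' + n - i) :=
            Finset.sum_le_sum_of_subset (by
              apply Finset.range_subset_range.2
              omega)
        _ = catalan (m' + 1 + n) := by
            rw [show m' + 1 + n = (m' + n) + 1 by omega, catalan_range_succ]

lemma GG_le (M : Multiset ℕ) : GG M ≤ catalan M.sum := by
  induction M using Multiset.induction with
  | empty => simp [GG]
  | cons n M ih =>
    rw [GG_cons, Multiset.sum_cons]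
    calc catalan n * GG M ≤ catalan n * catalan M.sum := Nat.mul_le_mul_left _ ih
      _ ≤ catalan (n + M.sum) := catalan_mul_le n M.sum

lemma per_apply (f : Perm α) {a : α} (ha : f a ≠ a) (n : ℕ) :
    (f ^ n) a = a ↔ (f.cycleOf a).support.card ∣ n :=
  (f.isCycleOn_support_cycleOf a).pow_apply_eq
    (mem_support_cycleOf_iff.2 ⟨SameCycle.refl f a, mem_support.2 ha⟩)

/-- The set of permutations on a geodesic from `1` to `π`. -/
def Sgeo (π : Perm α) : Finset (Perm α) :=
  Finset.univ.filter (fun σ => dd σ + dd (σ⁻¹ * π) = dd π)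

lemma mem_Sgeo (π σ : Perm α) : σ ∈ Sgeo π ↔ dd σ + dd (σ⁻¹ * π) = dd π := by
  rw [Sgeo, Finset.mem_filter]
  simp

lemma mem_Sgeo_step {ρ σ : Perm α} {a : α} (hσ : σ ∈ Sgeo ρ) (hσa : σ a = a) (hρa : ρ a ≠ a) :
    σ ∈ Sgeo (Equiv.swap a (ρ a) * ρ) := by
  rw [mem_Sgeo] at hσ ⊢
  have hτa : (σ⁻¹ * ρ) a ≠ a := by
    intro e
    apply hρa
    have h1 : σ ((σ⁻¹ * ρ) a) = σ a := congrArg σ e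
    rw [mul_apply, Perm.coe_inv, apply_symm_apply, hσa] at h1
    exact h1
  have hσia : σ⁻¹ a = a := by
    conv_lhs => rw [← hσa]
    exact symm_apply_apply σ a
  have hconj : σ⁻¹ * (Equiv.swap a (ρ a) * ρ) = Equiv.swap a ((σ⁻¹ * ρ) a) * (σ⁻¹ * ρ) := by
    have h1 : Equiv.swap (σ⁻¹ a) (σ⁻¹ (ρ a)) = σ⁻¹ * Equiv.swap a (ρ a) * σ⁻¹⁻¹ :=
      swap_apply_apply σ⁻¹ a (ρ a)
    rw [inv_inv] at h1
    rw [hσia] at h1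
    have h2 : (σ⁻¹ * ρ) a = σ⁻¹ (ρ a) := rfl
    rw [h2, h1]
    group
  rw [hconj]
  have e1 : dd (Equiv.swap a ((σ⁻¹ * ρ) a) * (σ⁻¹ * ρ)) + 1 = dd (σ⁻¹ * ρ) :=
    split_dd (σ⁻¹ * ρ) (Ne.symm hτa) ⟨1, by rw [zpow_one]⟩
  have e2 : dd (Equiv.swap a (ρ a) * ρ) + 1 = dd ρ :=
    split_dd ρ (Ne.symm hρa) ⟨1, by rw [zpow_one]⟩
  omega

lemma fiber_step {π σ : Perm α} {a c : α} (hσ : σ ∈ Sgeo π) (hac : a ≠ c) (hσa : σ a = c)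
    (hsc : π.SameCycle a c) :
    (Equiv.swap a c * σ) ∈ Sgeo (Equiv.swap a c * π) ∧ (Equiv.swap a c * σ) a = a := by
  rw [mem_Sgeo] at hσ
  constructor
  · rw [mem_Sgeo]
    have e1 : dd (Equiv.swap a c * σ) + 1 = dd σ :=
      split_dd σ hac ⟨1, by rw [zpow_one, hσa]⟩
    have e2 : dd (Equiv.swap a c * π) + 1 = dd π := split_dd π hac hsc
    have e3 : (Equiv.swap a c * σ)⁻¹ * (Equiv.swap a c * π) = σ⁻¹ * π := by
      rw [mul_inv_rev, swap_inv, mul_assoc, ← mul_assoc (Equiv.swap a c), swap_mul_self, one_mul]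
    rw [e3]
    omega
  · rw [mul_apply, hσa]
    exact swap_apply_right a c

lemma fiber_empty {π σ : Perm α} {a c : α} (hσ : σ ∈ Sgeo π) (hac : a ≠ c) (hσa : σ a = c)
    (hnsc : ¬ π.SameCycle a c) : False := by
  rw [mem_Sgeo] at hσ
  have e1 : dd (Equiv.swap a c * σ) + 1 = dd σ :=
    split_dd σ hac ⟨1, by rw [zpow_one, hσa]⟩
  have e2 : dd (Equiv.swap a c * π) = dd π + 1 := dd_merge π hac hnsc
  have e3 : Equiv.swap a c * π = (Equiv.swap a c * σ) * (σ⁻¹ * π) := by group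
  have e4 : dd (Equiv.swap a c * π) ≤ dd (Equiv.swap a c * σ) + dd (σ⁻¹ * π) := by
    rw [e3]
    exact dd_mul_le _ _
  omega

lemma f2_one : f2 1 = (0 : Multiset ℕ) := by simp [f2]

theorem main_count_aux : ∀ (n : ℕ) (π : Perm α), dd π = n → (Sgeo π).card ≤ GG π.cycleType := by
  intro n
  induction n using Nat.strong_induction_on with
  | _ n ih =>
  intro π hn
  by_cases hπ : π = 1
  · subst hπ
    have hsub : Sgeo (1 : Perm α) ⊆ {1} := by
      intro σ hσ
      rw [mem_Sgeo, dd_one] at hσ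
      have : dd σ = 0 := by omega
      simp [eq_one_of_dd_eq_zero this]
    calc (Sgeo (1 : Perm α)).card ≤ ({1} : Finset (Perm α)).card := Finset.card_le_card hsub
      _ = 1 := Finset.card_singleton _
      _ ≤ GG (1 : Perm α).cycleType := by simp [cycleType_one, GG]
  · have hex : ∃ a, π a ≠ a := by
      by_contra hc
      push_neg at hc
      exact hπ (Equiv.ext fun x => hc x)
    obtain ⟨a, ha⟩ := hex
    set m := (π.cycleOf a).support.card with hm
    have hm2 : 2 ≤ m := (isCycle_cycleOf π ha).two_le_card_support
    obtain ⟨u0, H, hu00, hu0m, hu0a, hcons0, hct0, -⟩ :=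
      split π (Ne.symm ha) ⟨1, by rw [zpow_one]⟩
    have hu01 : u0 = 1 := by
      by_contra hne
      have h1 : (π ^ (u0 - 1)) a = a := by
        apply π.injective
        have h2 : π ((π ^ (u0 - 1)) a) = (π ^ u0) a := by
          rw [← mul_apply, ← pow_succ', show u0 - 1 + 1 = u0 by omega]
        rw [h2, hu0a]
      have hdvd := (per_apply π ha (u0 - 1)).1 h1
      have := Nat.le_of_dvd (by omega) hdvd
      omega
    rw [hu01] at hct0
    have hdd0 : dd (Equiv.swap a (π a) * π) + 1 = dd π :=
      split_dd π (Ne.symm ha) ⟨1, by rw [zpow_one]⟩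
    have hfib_a : ((Sgeo π).filter (fun σ => σ a = a)).card ≤ catalan (m - 1) * GG H := by
      have hsub : (Sgeo π).filter (fun σ => σ a = a) ⊆ Sgeo (Equiv.swap a (π a) * π) := by
        intro σ hσ
        rw [Finset.mem_filter] at hσ
        exact mem_Sgeo_step hσ.1 hσ.2 ha
      calc ((Sgeo π).filter (fun σ => σ a = a)).card
          ≤ (Sgeo (Equiv.swap a (π a) * π)).card := Finset.card_le_card hsub
        _ ≤ GG (Equiv.swap a (π a) * π).cycleType := ih _ (by omega) _ rfl
        _ = catalan (m - 1) * GG H := by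
            rw [hct0, f2_one, zero_add, GG_add, GG_f2 (by omega)]
    have hfib_c : ∀ c : α, ∃ u : ℕ, a ≠ c → π.SameCycle a c →
        (0 < u ∧ u < m ∧ (π ^ u) a = c ∧
          ((Sgeo π).filter (fun σ => σ a = c)).card ≤
            catalan (u - 1) * catalan (m - u) * GG H) := by
      intro c
      by_cases hac : a ≠ c
      swap
      · exact ⟨0, fun h => absurd h hac⟩
      by_cases hsc : π.SameCycle a c
      swap
      · exact ⟨0, fun _ h => absurd h hsc⟩
      obtain ⟨u, H', hu0, hum, hua, hconsC, hctC, hcardC⟩ := split π hac hsc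
      refine ⟨u, fun _ _ => ⟨hu0, hum, hua, ?_⟩⟩
      have hH' : H' = H := by
        rw [hcons0] at hconsC
        exact ((Multiset.cons_inj_right _).1 hconsC).symm
      rw [hH'] at hctC
      have hddc : dd (Equiv.swap a c * π) + 1 = dd π := split_dd π hac hsc
      have hinj : Set.InjOn (fun σ => Equiv.swap a c * σ)
          ((Sgeo π).filter (fun σ => σ a = c)) := by
        intro x _ y _ he
        exact mul_left_cancel (he : Equiv.swap a c * x = Equiv.swap a c * y)
      by_cases hfix : (Equiv.swap a c * π) a = a
      · have hu1 : u = 1 := by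
          by_contra hne
          rw [if_neg hne] at hcardC
          have h1 : (Equiv.swap a c * π).cycleOf a = 1 := (cycleOf_eq_one_iff _).2 hfix
          rw [h1, support_one, Finset.card_empty] at hcardC
          omega
        have hmap : ∀ σ ∈ (Sgeo π).filter (fun σ => σ a = c),
            Equiv.swap a c * σ ∈ Sgeo (Equiv.swap a c * π) := by
          intro σ hσ
          rw [Finset.mem_filter] at hσ
          exact (fiber_step hσ.1 hac hσ.2 hsc).1
        calc ((Sgeo π).filter (fun σ => σ a = c)).card
            ≤ (Sgeo (Equiv.swap a c * π)).card :=
              Finset.card_le_card_of_injOn _ hmap hinj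
          _ ≤ GG (Equiv.swap a c * π).cycleType := ih _ (by omega) _ rfl
          _ = catalan (u - 1) * catalan (m - u) * GG H := by
              rw [hctC, hu1, f2_one, zero_add, GG_add, GG_f2 (by omega)]
              simp [catalan_zero, hm]
      · have hune : u ≠ 1 := by
          intro h1
          apply hfix
          have h2 : π a = c := by rw [← hua, h1, pow_one]
          rw [mul_apply, h2]
          exact swap_apply_right a c
        rw [if_neg hune] at hcardC
        obtain ⟨u', H'', hu'0, hu'm, hu'a, hcons2, hct2, -⟩ :=
          split (Equiv.swap a c * π) (Ne.symm hfix) ⟨1, by rw [zpow_one]⟩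
        rw [hcardC] at hu'm hcons2 hct2
        have hu'1 : u' = 1 := by
          by_contra hne
          have h1 : ((Equiv.swap a c * π) ^ (u' - 1)) a = a := by
            apply (Equiv.swap a c * π).injective
            have h2 : (Equiv.swap a c * π) (((Equiv.swap a c * π) ^ (u' - 1)) a) =
                ((Equiv.swap a c * π) ^ u') a := by
              rw [← mul_apply, ← pow_succ', show u' - 1 + 1 = u' by omega]
            rw [h2, hu'a]
          have hdvd := (per_apply (Equiv.swap a c * π) hfix (u' - 1)).1 h1
          rw [hcardC] at hdvd
          have := Nat.le_of_dvd (by omega) hdvd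
          omega
        have hH'' : H'' = f2 (m - u) + H := by
          rw [hctC] at hcons2
          have hf2u : f2 u = ({u} : Multiset ℕ) := by rw [f2, if_pos (by omega)]
          rw [hf2u, add_assoc, Multiset.singleton_add] at hcons2
          exact ((Multiset.cons_inj_right _).1 hcons2).symm
        have hdd2 : dd (Equiv.swap a ((Equiv.swap a c * π) a) * (Equiv.swap a c * π)) + 1 =
            dd (Equiv.swap a c * π) :=
          split_dd (Equiv.swap a c * π) (Ne.symm hfix) ⟨1, by rw [zpow_one]⟩
        have hmap : ∀ σ ∈ (Sgeo π).filter (fun σ => σ a = c),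
            Equiv.swap a c * σ ∈
              Sgeo (Equiv.swap a ((Equiv.swap a c * π) a) * (Equiv.swap a c * π)) := by
          intro σ hσ
          rw [Finset.mem_filter] at hσ
          obtain ⟨h1, h2⟩ := fiber_step hσ.1 hac hσ.2 hsc
          exact mem_Sgeo_step h1 h2 hfix
        calc ((Sgeo π).filter (fun σ => σ a = c)).card
            ≤ (Sgeo (Equiv.swap a ((Equiv.swap a c * π) a) * (Equiv.swap a c * π))).card :=
              Finset.card_le_card_of_injOn _ hmap hinj
          _ ≤ GG (Equiv.swap a ((Equiv.swap a c * π) a) * (Equiv.swap a c * π)).cycleType :=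
              ih _ (by omega) _ rfl
          _ = catalan (u - 1) * catalan (m - u) * GG H := by
              rw [hct2, hu'1, f2_one, zero_add, hH'', GG_add, GG_add,
                GG_f2 (show 1 ≤ u - 1 by omega), GG_f2 (show 1 ≤ m - u by omega)]
              ring
    choose uu huu using hfib_c
    have hfib_n : ∀ c, a ≠ c → ¬ π.SameCycle a c →
        ((Sgeo π).filter (fun σ => σ a = c)).card = 0 := by
      intro c hac hnsc
      rw [Finset.card_eq_zero, Finset.filter_eq_empty_iff]
      intro σ hσ
      intro he
      exact fiber_empty hσ hac he hnsc
    have hdecomp : (Sgeo π).card =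
        ∑ c ∈ Finset.univ, ((Sgeo π).filter (fun σ => σ a = c)).card :=
      Finset.card_eq_sum_card_fiberwise (fun x _ => Finset.mem_univ (x a))
    have herase : ∑ c ∈ Finset.univ, ((Sgeo π).filter (fun σ => σ a = c)).card =
        ((Sgeo π).filter (fun σ => σ a = a)).card +
          ∑ c ∈ Finset.univ.erase a, ((Sgeo π).filter (fun σ => σ a = c)).card :=
      (Finset.add_sum_erase Finset.univ _ (Finset.mem_univ a)).symm
    have hzero : ∑ c ∈ (Finset.univ.erase a).filter (fun c => ¬ π.SameCycle a c),
        ((Sgeo π).filter (fun σ => σ a = c)).card = 0 := by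
      apply Finset.sum_eq_zero
      intro c hc
      rw [Finset.mem_filter, Finset.mem_erase] at hc
      exact hfib_n c (Ne.symm hc.1.1) hc.2
    have hsplit : ∑ c ∈ Finset.univ.erase a, ((Sgeo π).filter (fun σ => σ a = c)).card =
        ∑ c ∈ (Finset.univ.erase a).filter (fun c => π.SameCycle a c),
          ((Sgeo π).filter (fun σ => σ a = c)).card := by
      rw [← Finset.sum_filter_add_sum_filter_not (Finset.univ.erase a)
        (fun c => π.SameCycle a c), hzero, add_zero]
    have hinj_uu : Set.InjOn uu ((Finset.univ.erase a).filter (fun c => π.SameCycle a c)) := by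
      intro c hc c' hc' he
      rw [Finset.coe_filter] at hc hc'
      simp only [Set.mem_setOf_eq, Finset.mem_erase] at hc hc'
      obtain ⟨-, -, hc3, -⟩ := huu c (Ne.symm hc.1.1) hc.2
      obtain ⟨-, -, hc3', -⟩ := huu c' (Ne.symm hc'.1.1) hc'.2
      rw [← hc3, ← hc3', he]
    have himg : ((Finset.univ.erase a).filter (fun c => π.SameCycle a c)).image uu ⊆
        Finset.Ico 1 m := by
      intro i hi
      obtain ⟨c, hc, rfl⟩ := Finset.mem_image.1 hi
      rw [Finset.mem_filter, Finset.mem_erase] at hc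
      obtain ⟨h1, h2, -, -⟩ := huu c (Ne.symm hc.1.1) hc.2
      rw [Finset.mem_Ico]
      omega
    have hbound : ∑ c ∈ (Finset.univ.erase a).filter (fun c => π.SameCycle a c),
        ((Sgeo π).filter (fun σ => σ a = c)).card ≤
        ∑ i ∈ Finset.Ico 1 m, catalan (i - 1) * catalan (m - i) * GG H := by
      calc ∑ c ∈ (Finset.univ.erase a).filter (fun c => π.SameCycle a c),
            ((Sgeo π).filter (fun σ => σ a = c)).card
          ≤ ∑ c ∈ (Finset.univ.erase a).filter (fun c => π.SameCycle a c),
            catalan (uu c - 1) * catalan (m - uu c) * GG H := by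
            apply Finset.sum_le_sum
            intro c hc
            rw [Finset.mem_filter, Finset.mem_erase] at hc
            exact (huu c (Ne.symm hc.1.1) hc.2).2.2.2
        _ = ∑ i ∈ ((Finset.univ.erase a).filter (fun c => π.SameCycle a c)).image uu,
            catalan (i - 1) * catalan (m - i) * GG H := (Finset.sum_image
              (f := fun i => catalan (i - 1) * catalan (m - i) * GG H) (g := uu)
              (fun c hc c' hc' he => hinj_uu (Finset.mem_coe.2 hc) (Finset.mem_coe.2 hc') he)).symm
        _ ≤ ∑ i ∈ Finset.Ico 1 m, catalan (i - 1) * catalan (m - i) * GG H :=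
            Finset.sum_le_sum_of_subset himg
    have hcat : catalan (m - 1) + ∑ i ∈ Finset.Ico 1 m, catalan (i - 1) * catalan (m - i) =
        catalan m := by
      have h1 : ∑ i ∈ Finset.Ico 1 m, catalan (i - 1) * catalan (m - i) =
          ∑ i ∈ Finset.range (m - 1), catalan i * catalan (m - 1 - i) := by
        rw [Finset.sum_Ico_eq_sum_range]
        apply Finset.sum_congr rfl
        intro i hi
        have := Finset.mem_range.1 hi
        congr 1
        · congr 1
          omega
        · congr 1
          omega
      rw [h1]
      conv_rhs => rw [show m = (m - 1) + 1 by omega, catalan_range_succ]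
      rw [Finset.sum_range_succ]
      simp only [Nat.sub_self, catalan_zero, mul_one]
      omega
    have hGGπ : GG π.cycleType = catalan m * GG H := by rw [hcons0, GG_cons]
    rw [hdecomp, herase, hsplit, hGGπ]
    have hIco : ∑ i ∈ Finset.Ico 1 m, catalan (i - 1) * catalan (m - i) * GG H =
        (∑ i ∈ Finset.Ico 1 m, catalan (i - 1) * catalan (m - i)) * GG H :=
      (Finset.sum_mul _ _ _).symm
    calc ((Sgeo π).filter (fun σ => σ a = a)).card +
          ∑ c ∈ (Finset.univ.erase a).filter (fun c => π.SameCycle a c),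
            ((Sgeo π).filter (fun σ => σ a = c)).card
        ≤ catalan (m - 1) * GG H +
            ∑ i ∈ Finset.Ico 1 m, catalan (i - 1) * catalan (m - i) * GG H :=
          Nat.add_le_add hfib_a hbound
      _ = (catalan (m - 1) + ∑ i ∈ Finset.Ico 1 m, catalan (i - 1) * catalan (m - i)) * GG H := by
          rw [hIco, Nat.add_mul]
      _ = catalan m * GG H := by rw [hcat]

theorem main_count (π : Perm α) : (Sgeo π).card ≤ GG π.cycleType :=
  main_count_aux (dd π) π rfl

end CatGeo

theorem card_perms_on_geodesic_le_catalan {k : ℕ} (hk : 1 ≤ k) (π : Equiv.Perm (Fin k)) :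
    (Finset.univ.filter fun σ : Equiv.Perm (Fin k) =>
        cyc (π⁻¹ * σ) + cyc σ = k + cyc π).card ≤ catalan k := by
  classical
  have hDD : ∀ M : Multiset ℕ, (∀ x ∈ M, 1 ≤ x) → CatGeo.DD M + Multiset.card M = M.sum := by
    intro M
    induction M using Multiset.induction with
    | empty => simp [CatGeo.DD]
    | cons n M ih =>
      intro h
      rw [CatGeo.DD_cons, Multiset.card_cons, Multiset.sum_cons]
      have h1 := ih (fun x hx => h x (Multiset.mem_cons_of_mem hx))
      have h2 := h n (Multiset.mem_cons_self n M)
      omega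
  have hcyc : ∀ f : Equiv.Perm (Fin k), cyc f + CatGeo.dd f = k := by
    intro f
    have h1 : (Finset.univ.filter fun x => f x = x) = f.supportᶜ := by
      ext x
      simp [Equiv.Perm.mem_support, Finset.mem_filter, Finset.mem_compl, not_not]
    have h2 := hDD f.cycleType (fun x hx => by
      have := Equiv.Perm.two_le_of_mem_cycleType hx
      omega)
    have h3 : f.cycleType.sum = f.support.card := Equiv.Perm.sum_cycleType f
    have h4 : f.support.card ≤ k := by
      have := Finset.card_le_univ f.support
      simpa using this
    have h5 : CatGeo.dd f = CatGeo.DD f.cycleType := rfl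
    rw [cyc, h1, Finset.card_compl]
    simp only [Fintype.card_fin]
    omega
  have heq : (Finset.univ.filter fun σ : Equiv.Perm (Fin k) =>
      cyc (π⁻¹ * σ) + cyc σ = k + cyc π) = CatGeo.Sgeo π := by
    rw [CatGeo.Sgeo]
    apply Finset.filter_congr
    intro σ _
    have e1 := hcyc (π⁻¹ * σ)
    have e2 := hcyc σ
    have e3 := hcyc π
    have e4 : CatGeo.dd (π⁻¹ * σ) = CatGeo.dd (σ⁻¹ * π) := by
      rw [← CatGeo.dd_inv (π⁻¹ * σ), mul_inv_rev, inv_inv]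
    constructor
    · intro h; omega
    · intro h; omega
  rw [heq]
  calc (CatGeo.Sgeo π).card ≤ CatGeo.GG π.cycleType := CatGeo.main_count π
    _ ≤ catalan π.cycleType.sum := CatGeo.GG_le _
    _ ≤ catalan k := CatGeo.catalan_mono (by
        rw [Equiv.Perm.sum_cycleType]
        have := Finset.card_le_univ π.support
        simpa using this)
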